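/- arXiv:2005.01359 — 5 statements merged into one kernel-verified Lean document; each statement's English description precedes it below -/
import Mathlib

section
/- Let D be a digraph and S, T disjoint vertex sets. If C₁ and C₂ are minimum S-T separators, and R₁, R₂ are the sets of vertices reachable from S after removing C₁, C₂ respectively, then the out-neighborhood of R₁ ∩ R₂ and the out-neighborhood of R₁ ∪ R₂ are also minimum S-T separators of D. -/
variable {V : Type*}

/-- `u` reaches `v` in the digraph with arc relation `A` after deleting the vertex set `X`. -/
def Reaches (A : V → V → Prop) (X : Set V) (u v : V) : Prop :=
  u ∉ X ∧ Relation.ReflTransGen (fun a b => A a b ∧ b ∉ X) u v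

/-- The set of vertices reachable from `S` after deleting `X`. -/
def ReachSet (A : V → V → Prop) (S X : Set V) : Set V :=
  {v | ∃ s ∈ S, Reaches A X s v}

/-- The out-neighbourhood of `R`: vertices outside `R` with an in-neighbour in `R`. -/
def Nplus (A : V → V → Prop) (R : Set V) : Set V :=
  {v | v ∉ R ∧ ∃ u ∈ R, A u v}

/-- `C` is an `S`-`T` separator. -/
def IsSep (A : V → V → Prop) (S T C : Set V) : Prop :=
  C ∩ S = ∅ ∧ C ∩ T = ∅ ∧ ∀ s ∈ S, ∀ t ∈ T, ¬ Reaches A C s t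

/-- `C` is a minimum `S`-`T` separator. -/
def IsMinSep (A : V → V → Prop) (S T C : Set V) : Prop :=
  IsSep A S T C ∧ ∀ C', IsSep A S T C' → C.ncard ≤ C'.ncard

/-- `u` reaches `v` by a path all of whose vertices lie in `P`. -/
def ReachIn (A : V → V → Prop) (P : Set V) (u v : V) : Prop :=
  u ∈ P ∧ Relation.ReflTransGen (fun a b => A a b ∧ b ∈ P) u v

lemma reachSet_closed {A : V → V → Prop} {S C : Set V} {u v : V}
    (hu : u ∈ ReachSet A S C) (huv : A u v) (hv : v ∉ C) : v ∈ ReachSet A S C := by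
  obtain ⟨s, hs, hsC, hrtg⟩ := hu
  exact ⟨s, hs, hsC, hrtg.tail ⟨huv, hv⟩⟩

lemma subset_reachSet {A : V → V → Prop} {S C : Set V} (hCS : C ∩ S = ∅) :
    S ⊆ ReachSet A S C := fun s hs =>
  ⟨s, hs, fun hsC => Set.eq_empty_iff_forall_notMem.1 hCS s ⟨hsC, hs⟩,
    Relation.ReflTransGen.refl⟩

lemma crossing {A : V → V → Prop} {X R : Set V} {u v : V}
    (h : Relation.ReflTransGen (fun a b => A a b ∧ b ∉ X) u v) :
    u ∈ R → v ∉ R → ∃ b, b ∉ X ∧ b ∈ Nplus A R := by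
  induction h with
  | refl => exact fun hu hv => absurd hu hv
  | @tail b c _ hbc ih =>
    intro hu hv
    by_cases hbR : b ∈ R
    · exact ⟨c, hbc.2, hv, b, hbR, hbc.1⟩
    · exact ih hu hbR

lemma t_notMem_reach {A : V → V → Prop} {S T C : Set V} (hsep : IsSep A S T C)
    {t : V} (ht : t ∈ T) : t ∉ ReachSet A S C := by
  rintro ⟨s, hs, hr⟩
  exact hsep.2.2 s hs t ht hr

lemma t_not_step {A : V → V → Prop} {S T C : Set V} (hsep : IsSep A S T C)
    {u t : V} (hu : u ∈ ReachSet A S C) (hut : A u t) (ht : t ∈ T) : False := by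
  by_cases htC : t ∈ C
  · exact Set.eq_empty_iff_forall_notMem.1 hsep.2.1 t ⟨htC, ht⟩
  · exact t_notMem_reach hsep ht (reachSet_closed hu hut htC)

lemma isSep_nplus {A : V → V → Prop} {S T R : Set V}
    (hSR : S ⊆ R) (hTR : ∀ t ∈ T, t ∉ R) (hNT : ∀ t ∈ T, t ∉ Nplus A R) :
    IsSep A S T (Nplus A R) := by
  refine ⟨?_, ?_, ?_⟩
  · apply Set.eq_empty_iff_forall_notMem.2
    rintro x ⟨hxN, hxS⟩
    exact hxN.1 (hSR hxS)
  · apply Set.eq_empty_iff_forall_notMem.2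
    rintro x ⟨hxN, hxT⟩
    exact hNT x hxT hxN
  · rintro s hs t ht ⟨-, hrtg⟩
    obtain ⟨b, hbX, hbN⟩ := crossing hrtg (hSR hs) (hTR t ht)
    exact hbX hbN

lemma nplus_reach_subset {A : V → V → Prop} {S C : Set V} :
    Nplus A (ReachSet A S C) ⊆ C := by
  rintro v ⟨hvR, u, huR, huv⟩
  by_contra hvC
  exact hvR (reachSet_closed huR huv hvC)

/-- Submodularity of separators. -/
theorem submodularity_of_separators [Fintype V] (A : V → V → Prop) (S T C₁ C₂ : Set V)
    (hST : Disjoint S T)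
    (h1 : IsMinSep A S T C₁) (h2 : IsMinSep A S T C₂) :
    IsMinSep A S T (Nplus A (ReachSet A S C₁ ∩ ReachSet A S C₂)) ∧
      IsMinSep A S T (Nplus A (ReachSet A S C₁ ∪ ReachSet A S C₂)) := by
  set R₁ := ReachSet A S C₁ with hR₁
  set R₂ := ReachSet A S C₂ with hR₂
  set N₁ := Nplus A R₁ with hN₁
  set N₂ := Nplus A R₂ with hN₂
  set P := Nplus A (R₁ ∩ R₂) with hP
  set Q := Nplus A (R₁ ∪ R₂) with hQ
  have hS1 : S ⊆ R₁ := subset_reachSet h1.1.1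
  have hS2 : S ⊆ R₂ := subset_reachSet h2.1.1
  have hT1 : ∀ t ∈ T, t ∉ R₁ := fun t ht => t_notMem_reach h1.1 ht
  have hT2 : ∀ t ∈ T, t ∉ R₂ := fun t ht => t_notMem_reach h2.1 ht
  -- P is a separator
  have hPsep : IsSep A S T P := by
    have hSR : S ⊆ R₁ ∩ R₂ := fun s hs => ⟨hS1 hs, hS2 hs⟩
    apply isSep_nplus hSR (fun t ht h => hT1 t ht h.1)
    rintro t ht ⟨-, u, ⟨hu1, -⟩, hut⟩
    exact t_not_step h1.1 hu1 hut ht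
  -- Q is a separator
  have hQsep : IsSep A S T Q := by
    have hSR : S ⊆ R₁ ∪ R₂ := fun s hs => Or.inl (hS1 hs)
    apply isSep_nplus hSR (fun t ht h => h.elim (hT1 t ht) (hT2 t ht))
    rintro t ht ⟨-, u, hu, hut⟩
    cases hu with
    | inl hu1 => exact t_not_step h1.1 hu1 hut ht
    | inr hu2 => exact t_not_step h2.1 hu2 hut ht
  -- subset relations
  have hPsub : P ⊆ N₁ ∪ N₂ := by
    rintro v ⟨hv, u, ⟨hu1, hu2⟩, huv⟩
    by_cases hv1 : v ∈ R₁
    · exact Or.inr ⟨fun hv2 => hv ⟨hv1, hv2⟩, u, hu2, huv⟩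
    · exact Or.inl ⟨hv1, u, hu1, huv⟩
  have hQsub : Q ⊆ N₁ ∪ N₂ := by
    rintro v ⟨hv, u, hu, huv⟩
    cases hu with
    | inl hu1 => exact Or.inl ⟨fun h => hv (Or.inl h), u, hu1, huv⟩
    | inr hu2 => exact Or.inr ⟨fun h => hv (Or.inr h), u, hu2, huv⟩
  have hPQsub : P ∩ Q ⊆ N₁ ∩ N₂ := by
    rintro v ⟨⟨-, u, ⟨hu1, hu2⟩, huv⟩, hvQ, -⟩
    exact ⟨⟨fun h => hvQ (Or.inl h), u, hu1, huv⟩,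
      ⟨fun h => hvQ (Or.inr h), u, hu2, huv⟩⟩
  -- cardinalities
  have hN1C : N₁ ⊆ C₁ := nplus_reach_subset
  have hN2C : N₂ ⊆ C₂ := nplus_reach_subset
  have hk : C₂.ncard = C₁.ncard :=
    le_antisymm (h2.2 C₁ h1.1) (h1.2 C₂ h2.1)
  have hchain : P.ncard + Q.ncard ≤ C₁.ncard + C₂.ncard := by
    have e1 : (P ∪ Q).ncard + (P ∩ Q).ncard = P.ncard + Q.ncard :=
      Set.ncard_union_add_ncard_inter P Q
    have e2 : (N₁ ∪ N₂).ncard + (N₁ ∩ N₂).ncard = N₁.ncard + N₂.ncard :=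
      Set.ncard_union_add_ncard_inter N₁ N₂
    have l1 : (P ∪ Q).ncard ≤ (N₁ ∪ N₂).ncard :=
      Set.ncard_le_ncard (Set.union_subset hPsub hQsub) (Set.toFinite _)
    have l2 : (P ∩ Q).ncard ≤ (N₁ ∩ N₂).ncard :=
      Set.ncard_le_ncard hPQsub (Set.toFinite _)
    have l3 : N₁.ncard ≤ C₁.ncard := Set.ncard_le_ncard hN1C (Set.toFinite _)
    have l4 : N₂.ncard ≤ C₂.ncard := Set.ncard_le_ncard hN2C (Set.toFinite _)
    omega
  have hPge : C₁.ncard ≤ P.ncard := h1.2 P hPsep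
  have hQge : C₁.ncard ≤ Q.ncard := h1.2 Q hQsep
  have hPcard : P.ncard = C₁.ncard := by omega
  have hQcard : Q.ncard = C₁.ncard := by omega
  exact ⟨⟨hPsep, fun C' hC' => hPcard ▸ h1.2 C' hC'⟩,
    ⟨hQsep, fun C' hC' => hQcard ▸ h1.2 C' hC'⟩⟩
end

section
/- Let D be a digraph and S, T disjoint subsets of V(D). Let C be the closest minimum S-T separator (the unique minimum S-T separator covered by every minimum S-T separator) and let v be a vertex reachable from S in D − C. Then every S-(T ∪ {v}) separator has size strictly greater than λ_D(S,T), the size of a minimum S-T separator. -/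
variable {V : Type*}

/-- If `C` is the closest minimum `S`-`T` separator (covered by every minimum `S`-`T`
separator) and `v` is reachable from `S` in `D − C`, then every `S`-`(T ∪ {v})`
separator is strictly larger than `λ_D(S,T) = |C|`. -/
theorem closest_sep_lambda_increase [Fintype V] (A : V → V → Prop) (S T C : Set V)
    (hST : Disjoint S T)
    (hmin : IsMinSep A S T C)
    (hclosest : ∀ C', IsMinSep A S T C' → ReachSet A S C ⊆ ReachSet A S C')
    (v : V) (hv : v ∈ ReachSet A S C) :
    ∀ C', IsSep A S (T ∪ {v}) C' → C.ncard < C'.ncard := by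
  intro C' hC'
  obtain ⟨hS, hTv, hsep⟩ := hC'
  have hCsep : IsSep A S T C' := by
    refine ⟨hS, ?_, fun s hs t ht => hsep s hs t (Or.inl ht)⟩
    have : C' ∩ T ⊆ C' ∩ (T ∪ {v}) := Set.inter_subset_inter_right _ Set.subset_union_left
    rw [hTv] at this
    exact Set.subset_eq_empty this rfl
  have hle : C.ncard ≤ C'.ncard := hmin.2 C' hCsep
  rcases lt_or_eq_of_le hle with h | h
  · exact h
  · exfalso
    have hminC' : IsMinSep A S T C' := ⟨hCsep, fun C'' h'' => h ▸ hmin.2 C'' h''⟩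
    obtain ⟨s, hs, hr⟩ := hclosest C' hminC' hv
    exact hsep s hs v (Or.inr rfl) hr
end

section
/- Let D be a digraph, X ⊆ V(D) an H-deletion set (no strong component of D − X contains a subgraph isomorphic to a member of the family H), and F ⊆ D a subgraph isomorphic to some graph in H. Suppose there is a collection of paths P containing, for each ordered pair (x,y) ∈ V(F) × V(F), a directed path P_{xy} from x to y in D. Then there exists a vertex a ∈ X such that for every v ∈ V(F) there is a directed path from v to a and a directed path from a to v, both contained in the union of the paths in P. -/
variable {V : Type*}

private lemma mem_of_chain {A : V → V → Prop} {P : Set V} {u v : V}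
    (hu : u ∈ P) (h : Relation.ReflTransGen (fun a b => A a b ∧ b ∈ P) u v) : v ∈ P := by
  induction h with
  | refl => exact hu
  | tail _ hbc ih => exact hbc.2

private lemma chain_split {A : V → V → Prop} {P X : Set V} {u v : V}
    (h : Relation.ReflTransGen (fun a b => A a b ∧ b ∈ P) u v) :
    Relation.ReflTransGen (fun a b => A a b ∧ b ∉ X) u v ∨
      ∃ a ∈ X, Relation.ReflTransGen (fun a b => A a b ∧ b ∈ P) u a ∧
        Relation.ReflTransGen (fun a b => A a b ∧ b ∈ P) a v := by
  induction h with
  | refl => exact Or.inl Relation.ReflTransGen.refl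
  | @tail b c hub hbc ih =>
    rcases ih with h1 | ⟨a, haX, h2, h3⟩
    · by_cases hc : c ∈ X
      · exact Or.inr ⟨c, hc, Relation.ReflTransGen.tail hub hbc,
          Relation.ReflTransGen.refl⟩
      · exact Or.inl (Relation.ReflTransGen.tail h1 ⟨hbc.1, hc⟩)
    · exact Or.inr ⟨a, haX, h2, Relation.ReflTransGen.tail h3 hbc⟩

/-- Let `X` be an `H`-deletion set of the digraph `A` (no strong component of `D − X`
contains a subgraph isomorphic to a member of the family `H`), let `F` be a subgraph of
`D` isomorphic to a member `p` of `H` (via the injective arc-preserving map `f`), and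
suppose `P` is the vertex set of a collection of paths containing, for each ordered pair
of vertices of `F`, a directed path between them in `D`. Then some vertex `a ∈ X` is
connected to and from every vertex of `F` by paths contained in the union `P`. -/
theorem solution_hits_paths (A : V → V → Prop) (X : Set V)
    (H : Set (Σ W : Type, W → W → Prop))
    (hX : ¬ ∃ p ∈ H, ∃ f : p.1 → V, Function.Injective f ∧
      (∀ a b, p.2 a b → A (f a) (f b)) ∧ (∀ a, f a ∉ X) ∧
      ∀ a b : p.1, Reaches A X (f a) (f b))
    (p : Σ W : Type, W → W → Prop) (hp : p ∈ H)
    (f : p.1 → V) (hinj : Function.Injective f)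
    (hhom : ∀ a b, p.2 a b → A (f a) (f b))
    (P : Set V)
    (hP : ∀ x y : p.1, ReachIn A P (f x) (f y)) :
    ∃ a ∈ X, ∀ w : p.1, ReachIn A P (f w) a ∧ ReachIn A P a (f w) := by
  by_cases hXf : ∀ a : p.1, f a ∉ X
  · have hnall : ¬ ∀ a b : p.1, Reaches A X (f a) (f b) := fun hall =>
      hX ⟨p, hp, f, hinj, hhom, hXf, hall⟩
    push_neg at hnall
    obtain ⟨a₀, b₀, hnr⟩ := hnall
    obtain ⟨huP, hchain⟩ := hP a₀ b₀
    rcases chain_split (X := X) hchain with h1 | ⟨a, haX, h2, h3⟩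
    · exact absurd ⟨hXf a₀, h1⟩ hnr
    · refine ⟨a, haX, fun w => ⟨⟨(hP w a₀).1, (hP w a₀).2.trans h2⟩,
        ⟨mem_of_chain huP h2, h3.trans (hP b₀ w).2⟩⟩⟩
  · push_neg at hXf
    obtain ⟨a, haX⟩ := hXf
    exact ⟨f a, haX, fun w => ⟨hP w a, hP a w⟩⟩
end

section
/- Let D be a digraph, S, T disjoint subsets of V(D) with λ_D(S,T) ≥ 1, and let C be a minimum S-T separator such that no vertex of R(S,C) (the set reachable from S in D − C) has out-degree ≥ 2 in D and R(S,C) is maximal with this property among minimum separators. If C is not the furthest minimum S-T separator, then there exists a vertex u₁ ∈ C with at least two out-neighbors in D, neither of which lies in T. -/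
variable {V : Type*}

private lemma walk_invariant {A : V → V → Prop} {X : Set V} (P : V → Prop) {u v : V}
    (h : Relation.ReflTransGen (fun a b => A a b ∧ b ∉ X) u v)
    (hu : P u) (step : ∀ a b, P a → A a b → b ∉ X → P b) : P v := by
  induction h with
  | refl => exact hu
  | tail _ h ih => exact step _ _ ih h.1 h.2

private lemma reachSet_notMem {A : V → V → Prop} {S X : Set V} {v : V}
    (h : v ∈ ReachSet A S X) : v ∉ X := by
  obtain ⟨s, _, hs, hw⟩ := h
  exact walk_invariant (fun u => u ∉ X) hw hs (fun a b _ _ hb => hb)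

private lemma reachSet_extend {A : V → V → Prop} {S X : Set V} {v y : V}
    (h : v ∈ ReachSet A S X) (ha : A v y) (hy : y ∉ X) : y ∈ ReachSet A S X := by
  obtain ⟨s, hsS, hs, hw⟩ := h
  exact ⟨s, hsS, hs, hw.tail ⟨ha, hy⟩⟩

/-- Let `C` be a minimum `S`-`T` separator (with `λ_D(S,T) ≥ 1`) such that every vertex
reachable from `S` in `D − C` has out-degree at most 1, and such that the reachable set
is maximal with this property among minimum separators. If `C` is not the furthest
minimum `S`-`T` separator, then some vertex `u₁ ∈ C` has two distinct out-neighbours in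
`D`, neither of which lies in `T`. -/
theorem branchable_vertex_on_separator [Fintype V] (A : V → V → Prop) (S T : Set V)
    (hST : Disjoint S T)
    (hpos : ¬ IsSep A S T ∅)
    (C : Set V) (hC : IsMinSep A S T C)
    (hdeg1 : ∀ v ∈ ReachSet A S C, ∀ a b, A v a → A v b → a = b)
    (hmax : ∀ C', IsMinSep A S T C' →
      (∀ v ∈ ReachSet A S C', ∀ a b, A v a → A v b → a = b) →
      ReachSet A S C' ⊆ ReachSet A S C)
    (hnotfar : ∃ C', IsMinSep A S T C' ∧ ¬ ReachSet A S C' ⊆ ReachSet A S C) :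
    ∃ u₁ ∈ C, ∃ u₂ u₃ : V, u₂ ≠ u₃ ∧ A u₁ u₂ ∧ A u₁ u₃ ∧ u₂ ∉ T ∧ u₃ ∉ T := by
  classical
  by_contra hgoal
  push_neg at hgoal
  obtain ⟨⟨hCS, hCT, hsep⟩, hmin⟩ := hC
  set R := ReachSet A S C with hRdef
  have hCfin : C.Finite := Set.toFinite C
  have hCS' : ∀ x ∈ C, x ∉ S := fun x hx hxS =>
    Set.eq_empty_iff_forall_notMem.mp hCS x ⟨hx, hxS⟩
  have hCT' : ∀ x ∈ C, x ∉ T := fun x hx hxT =>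
    Set.eq_empty_iff_forall_notMem.mp hCT x ⟨hx, hxT⟩
  have hSC : ∀ s ∈ S, s ∉ C := fun s hs hc => hCS' s hc hs
  have hSR : ∀ s ∈ S, s ∈ R := fun s hs => ⟨s, hs, hSC s hs, Relation.ReflTransGen.refl⟩
  have hRC : ∀ v ∈ R, v ∉ C := fun v hv => reachSet_notMem hv
  have hRT : ∀ v ∈ R, v ∉ T := by
    rintro v ⟨s, hsS, hr⟩ hvT
    exact hsep s hsS v hvT hr
  -- the negated goal, in usable form
  have H : ∀ u ∈ C, ∀ a b, A u a → A u b → a ∉ T → b ∉ T → a = b := by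
    intro u hu a b ha hb haT hbT
    by_contra hne
    exact hbT (hgoal u hu a b hne ha hb haT)
  -- every vertex of C is essential
  have hess : ∀ c ∈ C, ∃ s ∈ S, ∃ t ∈ T, Reaches A (C \ {c}) s t := by
    intro c hc
    by_contra hno
    push_neg at hno
    have hsep' : IsSep A S T (C \ {c}) :=
      ⟨Set.eq_empty_iff_forall_notMem.mpr (fun x hx => hCS' x hx.1.1 hx.2),
       Set.eq_empty_iff_forall_notMem.mpr (fun x hx => hCT' x hx.1.1 hx.2),
       fun s hs t ht hr => (hno s hs t ht) hr⟩
    have h1 := hmin _ hsep'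
    have h2 : (C \ {c}).ncard < C.ncard := Set.ncard_diff_singleton_lt_of_mem hc hCfin
    omega
  -- every vertex of C with no out-neighbour in T has an out-neighbour outside C ∪ S ∪ R
  have key8 : ∀ c ∈ C, (∀ y, A c y → y ∉ T) →
      ∃ y, A c y ∧ y ∉ C ∧ y ∉ S ∧ y ∉ R := by
    intro c hc hT
    by_contra hno
    push_neg at hno
    obtain ⟨s, hsS, t, htT, hsX, hw⟩ := hess c hc
    have hPt := walk_invariant (fun u => u ∈ R ∨ u = c) hw (Or.inl (hSR s hsS))
      (by
        intro a b hPa hab hbX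
        have hbc : b ∈ C → b = c := by
          intro hbC
          by_contra hne
          exact hbX ⟨hbC, hne⟩
        rcases hPa with haR | rfl
        · by_cases hbC : b ∈ C
          · exact Or.inr (hbc hbC)
          · exact Or.inl (reachSet_extend haR hab hbC)
        · by_cases hbC : b ∈ C
          · exact Or.inr (hbc hbC)
          · by_cases hbS : b ∈ S
            · exact Or.inl (hSR b hbS)
            · exact Or.inl (hno b hab hbC hbS))
    rcases hPt with htR | rfl
    · exact hRT t htR htT
    · exact hCT' t hc htT
  -- the pushing map σ
  have hσex : ∀ c : V, ∃ v : V,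
      ((¬ ∃ t ∈ T, A c t) → (∃ y, A c y) → A c v) ∧
      (((∃ t ∈ T, A c t) ∨ ¬ ∃ y, A c y) → v = c) := by
    intro c
    by_cases h1 : ∃ t ∈ T, A c t
    · exact ⟨c, fun hn _ => absurd h1 hn, fun _ => rfl⟩
    · by_cases h2 : ∃ y, A c y
      · refine ⟨h2.choose, fun _ _ => h2.choose_spec, fun h => ?_⟩
        rcases h with h | h
        · exact absurd h h1
        · exact absurd h2 h
      · exact ⟨c, fun _ h => absurd h h2, fun _ => rfl⟩
  choose σ hσ1 hσ2 using hσex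
  -- key properties of σ on "case B" vertices of C
  have hσB : ∀ c ∈ C, (∀ y, A c y → y ∉ T) →
      A c (σ c) ∧ σ c ∉ C ∧ σ c ∉ S ∧ σ c ∉ R ∧ σ c ∉ T ∧ (∀ y, A c y → y = σ c) := by
    intro c hc hT
    obtain ⟨y, hy, hyC, hyS, hyR⟩ := key8 c hc hT
    have hnt : ¬ ∃ t ∈ T, A c t := by
      rintro ⟨t, ht, hat⟩
      exact hT t hat ht
    have hex : ∃ y, A c y := ⟨y, hy⟩
    have hσc : A c (σ c) := hσ1 c hnt hex
    have huniq : ∀ z, A c z → z = σ c :=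
      fun z hz => H c hc z (σ c) hz hσc (hT z hz) (hT _ hσc)
    have hyeq : y = σ c := huniq y hy
    exact ⟨hσc, hyeq ▸ hyC, hyeq ▸ hyS, hyeq ▸ hyR, hT _ hσc, huniq⟩
  have hσprops : ∀ c ∈ C, σ c ∉ S ∧ σ c ∉ T ∧ σ c ∉ R := by
    intro c hc
    by_cases h1 : ∃ t ∈ T, A c t
    · rw [hσ2 c (Or.inl h1)]
      exact ⟨hCS' c hc, hCT' c hc, fun hr => hRC _ hr hc⟩
    · by_cases h2 : ∃ y, A c y
      · have hT : ∀ y, A c y → y ∉ T := fun y hay hyT => h1 ⟨y, hyT, hay⟩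
        obtain ⟨_, _, h3, h4, h5, _⟩ := hσB c hc hT
        exact ⟨h3, h5, h4⟩
      · rw [hσ2 c (Or.inr h2)]
        exact ⟨hCS' c hc, hCT' c hc, fun hr => hRC _ hr hc⟩
  set Cp := σ '' C with hCpdef
  have hCpcard : Cp.ncard ≤ C.ncard := Set.ncard_image_le hCfin
  have hCpS : ∀ x ∈ Cp, x ∉ S := by
    rintro x ⟨c, hc, rfl⟩
    exact (hσprops c hc).1
  have hCpT : ∀ x ∈ Cp, x ∉ T := by
    rintro x ⟨c, hc, rfl⟩
    exact (hσprops c hc).2.1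
  have hCpR : ∀ v ∈ R, v ∉ Cp := by
    rintro v hv ⟨c, hc, rfl⟩
    exact (hσprops c hc).2.2 hv
  -- vertices of C not in Cp are fully blocked
  have hblock : ∀ c ∈ C, c ∉ Cp →
      (∀ y, A c y → y ∉ T) ∧ (∀ y, A c y → y = σ c) ∧ σ c ∈ Cp := by
    intro c hc hcp
    have hT : ∀ y, A c y → y ∉ T := by
      intro y hy hyT
      have heq : σ c = c := hσ2 c (Or.inl ⟨y, hyT, hy⟩)
      exact hcp ⟨c, hc, heq⟩
    obtain ⟨_, _, _, _, _, h6⟩ := hσB c hc hT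
    exact ⟨hT, h6, ⟨c, hc, rfl⟩⟩
  -- everything reachable after deleting Cp lies in R ∪ C
  have hRCp : ∀ v ∈ ReachSet A S Cp, v ∈ R ∨ v ∈ C := by
    rintro v ⟨s, hsS, hsCp, hw⟩
    have := walk_invariant (fun u => (u ∈ R ∨ u ∈ C) ∧ u ∉ Cp) hw
      ⟨Or.inl (hSR s hsS), hsCp⟩
      (by
        intro a b hPa hab hbCp
        refine ⟨?_, hbCp⟩
        rcases hPa.1 with haR | haC
        · by_cases hbC : b ∈ C
          · exact Or.inr hbC
          · exact Or.inl (reachSet_extend haR hab hbC)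
        · obtain ⟨_, h2, h3⟩ := hblock a haC hPa.2
          exact absurd (h2 b hab ▸ h3) hbCp)
    exact this.1
  have hCpSep : IsSep A S T Cp := by
    refine ⟨Set.eq_empty_iff_forall_notMem.mpr (fun x hx => hCpS x hx.1 hx.2),
      Set.eq_empty_iff_forall_notMem.mpr (fun x hx => hCpT x hx.1 hx.2), ?_⟩
    intro s hs t ht hr
    rcases hRCp t ⟨s, hs, hr⟩ with h | h
    · exact hRT t h ht
    · exact hCT' t h ht
  have hCpMin : IsMinSep A S T Cp :=
    ⟨hCpSep, fun C₂ h₂ => le_trans hCpcard (hmin C₂ h₂)⟩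
  have hCpdeg : ∀ v ∈ ReachSet A S Cp, ∀ a b, A v a → A v b → a = b := by
    intro v hv a b ha hb
    rcases hRCp v hv with hvR | hvC
    · exact hdeg1 v hvR a b ha hb
    · have hvCp : v ∉ Cp := reachSet_notMem hv
      obtain ⟨_, h2, _⟩ := hblock v hvC hvCp
      rw [h2 a ha, h2 b hb]
  have hsub : ReachSet A S Cp ⊆ R := hmax Cp hCpMin hCpdeg
  have hRsub : R ⊆ ReachSet A S Cp := by
    rintro v ⟨s, hsS, hsC, hw⟩
    have hsCp : s ∉ Cp := fun h => hCpS s h hsS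
    have := walk_invariant (fun u => u ∈ R ∧ u ∈ ReachSet A S Cp) hw
      ⟨hSR s hsS, s, hsS, hsCp, Relation.ReflTransGen.refl⟩
      (by
        intro a b hPa hab hbC
        have hbR : b ∈ R := reachSet_extend hPa.1 hab hbC
        exact ⟨hbR, reachSet_extend hPa.2 hab (hCpR b hbR)⟩)
    exact this.2
  -- C is contained in Cp, hence Cp = C
  have hNp : ∀ c ∈ C, ∃ r ∈ R, A r c := by
    intro c hc
    obtain ⟨s, hsS, t, htT, hsX, hw⟩ := hess c hc
    have hPt := walk_invariant (fun u => u ∈ R ∨ ∃ r ∈ R, A r c) hw (Or.inl (hSR s hsS))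
      (by
        intro a b hPa hab hbX
        rcases hPa with haR | hfound
        · by_cases hbC : b ∈ C
          · have hbc : b = c := by
              by_contra hne
              exact hbX ⟨hbC, hne⟩
            exact Or.inr ⟨a, haR, hbc ▸ hab⟩
          · exact Or.inl (reachSet_extend haR hab hbC)
        · exact Or.inr hfound)
    rcases hPt with htR | hfound
    · exact absurd htT (hRT t htR)
    · exact hfound
  have hCsub : C ⊆ Cp := by
    intro c hc
    obtain ⟨r, hrR, hrc⟩ := hNp c hc
    by_contra hcp
    have : c ∈ ReachSet A S Cp := reachSet_extend (hRsub hrR) hrc hcp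
    exact hRC c (hsub this) hc
  have hCpeq : Cp = C := (Set.eq_of_subset_of_ncard_le hCsub hCpcard).symm
  -- final contradiction using a separator that reaches further
  obtain ⟨C', hC'min, hC'n⟩ := hnotfar
  obtain ⟨x, hxR', hxR⟩ := Set.not_subset.mp hC'n
  obtain ⟨s, hsS, hsC', hw⟩ := hxR'
  have hfin := walk_invariant
    (fun u => (u ∈ R ∧ u ∈ ReachSet A S C') ∨ ∃ c ∈ C, c ∈ ReachSet A S C') hw
    (Or.inl ⟨hSR s hsS, s, hsS, hsC', Relation.ReflTransGen.refl⟩)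
    (by
      intro a b hPa hab hbC'
      rcases hPa with ⟨haR, haRS⟩ | hfound
      · have hbRS : b ∈ ReachSet A S C' := reachSet_extend haRS hab hbC'
        by_cases hbC : b ∈ C
        · exact Or.inr ⟨b, hbC, hbRS⟩
        · exact Or.inl ⟨reachSet_extend haR hab hbC, hbRS⟩
      · exact Or.inr hfound)
  rcases hfin with ⟨hxR2, _⟩ | ⟨c, hcC, hcRS⟩
  · exact hxR hxR2
  · have hC'T : ∀ y ∈ ReachSet A S C', y ∉ T := by
      rintro y ⟨s₀, hs₀, hr⟩ hyT
      exact hC'min.1.2.2 s₀ hs₀ y hyT hr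
    have hC'Tc : ∀ y ∈ C', y ∉ T := fun y hy hyT =>
      Set.eq_empty_iff_forall_notMem.mp hC'min.1.2.1 y ⟨hy, hyT⟩
    have hT : ∀ y, A c y → y ∉ T := by
      intro y hy
      by_cases hyC' : y ∈ C'
      · exact hC'Tc y hyC'
      · exact hC'T y (reachSet_extend hcRS hy hyC')
    have hσcC : σ c ∈ C := hCpeq ▸ (⟨c, hcC, rfl⟩ : σ c ∈ Cp)
    exact (hσB c hcC hT).2.1 hσcC
end

section
/- Let D be a digraph, S₁ ⊆ R ⊆ V(D) such that every vertex of R is reachable from S₁ within D[R] and has out-degree at most 1 in D. Define close(S₁,R) = (R \ S₁) ∩ N⁻(S₁), the in-neighbors of S₁ in R \ S₁. Then |close(S₁,R)| ≤ |S₁|. -/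
variable {V : Type*}

/-- If every vertex of `R ⊇ S₁` is reachable from `S₁` inside `D[R]` and has out-degree
at most 1 in `D`, then `close(S₁,R) = (R \ S₁) ∩ N⁻(S₁)` has at most `|S₁|` elements. -/
theorem close_card_le [Fintype V] (A : V → V → Prop) (S₁ R : Set V)
    (hSR : S₁ ⊆ R)
    (hreach : ∀ v ∈ R, ∃ s ∈ S₁, ReachIn A R s v)
    (hdeg : ∀ v ∈ R, ∀ a b, A v a → A v b → a = b) :
    ((R \ S₁) ∩ {v | ∃ s ∈ S₁, A v s}).ncard ≤ S₁.ncard := by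
  classical
  set succ : V → V := fun v => if h : ∃ a, A v a then h.choose else v with hsucc
  have hsucc_eq : ∀ v ∈ R, ∀ a, A v a → succ v = a := by
    intro v hv a ha
    have h : ∃ a, A v a := ⟨a, ha⟩
    simp only [hsucc, dif_pos h]
    exact hdeg v hv _ _ h.choose_spec ha
  have hiter : ∀ s v, ReachIn A R s v →
      ∃ n, v = succ^[n] s ∧ ∀ m ≤ n, succ^[m] s ∈ R := by
    intro s v hr
    obtain ⟨hsR, hrt⟩ := hr
    induction hrt with
    | refl =>
      refine ⟨0, rfl, ?_⟩
      intro m hm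
      simp only [Nat.le_zero.mp hm, Function.iterate_zero_apply]
      exact hsR
    | tail h hab ih =>
      obtain ⟨n, rfl, hR⟩ := ih
      refine ⟨n + 1, ?_, ?_⟩
      · rw [Function.iterate_succ_apply']
        exact (hsucc_eq _ (hR n le_rfl) _ hab.1).symm
      · intro m hm
        rcases Nat.lt_or_ge m (n + 1) with h' | h'
        · exact hR m (Nat.lt_succ_iff.mp h')
        · have hmn : m = n + 1 := le_antisymm hm h'
          subst hmn
          rw [Function.iterate_succ_apply', hsucc_eq _ (hR n le_rfl) _ hab.1]
          exact hab.2
  set P : V → ℕ → Prop := fun v n => ∃ s ∈ S₁, v = succ^[n] s ∧ ∀ m ≤ n, succ^[m] s ∈ R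
    with hP
  have hex : ∀ v ∈ R, ∃ n, P v n := by
    intro v hv
    obtain ⟨s, hs, hr⟩ := hreach v hv
    obtain ⟨n, h1, h2⟩ := hiter s v hr
    exact ⟨n, s, hs, h1, h2⟩
  set nn : V → ℕ := fun v => if h : ∃ n, P v n then Nat.find h else 0 with hnn
  set f : V → V := fun v => if h : ∃ n, P v n then (Nat.find_spec h).choose else v with hf
  have hfspec : ∀ v ∈ R, f v ∈ S₁ ∧ v = succ^[nn v] (f v) ∧
      (∀ m ≤ nn v, succ^[m] (f v) ∈ R) ∧ ∀ k < nn v, ¬ P v k := by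
    intro v hv
    have h := hex v hv
    simp only [hf, hnn, dif_pos h]
    obtain ⟨hs, h1, h2⟩ := (Nat.find_spec h).choose_spec
    exact ⟨hs, h1, h2, fun k hk => Nat.find_min h hk⟩
  -- no intermediate vertex of the chosen path lies in S₁
  have hnomid : ∀ v ∈ R, ∀ m, 0 < m → m ≤ nn v → succ^[m] (f v) ∉ S₁ := by
    intro v hv m hm0 hmn ht
    obtain ⟨hfS, hveq, hRiter, hmin⟩ := hfspec v hv
    have hPk : P v (nn v - m) := by
      refine ⟨succ^[m] (f v), ht, ?_, ?_⟩
      · rw [← Function.iterate_add_apply, Nat.sub_add_cancel hmn]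
        exact hveq
      · intro k hk
        rw [← Function.iterate_add_apply]
        exact hRiter (k + m) (by omega)
    exact hmin _ (by omega) hPk
  set C := (R \ S₁) ∩ {v | ∃ s ∈ S₁, A v s} with hCdef
  have hCR : ∀ v ∈ C, v ∈ R := fun v hv => hv.1.1
  -- if v ∈ C then succ v ∈ S₁
  have hCsucc : ∀ v ∈ C, succ v ∈ S₁ := by
    intro v hv
    obtain ⟨s, hs, hAs⟩ := hv.2
    rw [hsucc_eq v (hCR v hv) s hAs]
    exact hs
  have hkey : ∀ v ∈ C, ∀ v' ∈ C, f v = f v' → nn v < nn v' → False := by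
    intro v hv v' hv' hff hlt
    have h1 := hfspec v (hCR v hv)
    have hS : succ^[nn v + 1] (f v') ∈ S₁ := by
      rw [← hff, Function.iterate_succ_apply', ← h1.2.1]
      exact hCsucc v hv
    exact hnomid v' (hCR v' hv') (nn v + 1) (by omega) (by omega) hS
  have hinj : Set.InjOn f C := by
    intro v hv v' hv' hff
    rcases lt_trichotomy (nn v) (nn v') with h | h | h
    · exact absurd (hkey v hv v' hv' hff h) (fun x => x)
    · have h1 := (hfspec v (hCR v hv)).2.1
      have h2 := (hfspec v' (hCR v' hv')).2.1
      rw [h1, h2, hff, h]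
    · exact absurd (hkey v' hv' v hv hff.symm h) (fun x => x)
  have hmaps : ∀ v ∈ C, f v ∈ S₁ := fun v hv => (hfspec v (hCR v hv)).1
  exact Set.ncard_le_ncard_of_injOn f hmaps hinj S₁.toFinite
end
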